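/- Let s ∈ S⁺ and u = (u_1,…,u_p) ∈ AP(s) with p > 2 blocks. Then the number of admissible shuffles satisfies the recurrence a(u) = Σ_{k=1}^{p−1} a(u_1,…,u_k∪u_p,…,u_{p−1}), where (u_1,…,u_k∪u_p,…,u_{p−1}) is the partition obtained from u by merging the last block u_p into u_k, and a(v) = 0 whenever the partition v is not admissible; moreover a(u) = 1 when u is an admissible partition with exactly two blocks. -/

import Mathlib

/-- The two-letter alphabet `{z, w}`. -/
inductive Letter | z | w
deriving DecidableEq

/-- Words: elements of the free monoid `S = FS({z,w})`. -/
abbrev Word := List Letter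

/-- The letter of `s` at position `j` (defaulting to `z`). -/
def letterAt (s : Word) (j : ℕ) : Letter := s.getD j Letter.z

/-- `P` is a partition of the finite set of positions `g ⊆ ℕ` into nonempty blocks. -/
def IsPartitionOn (g : Finset ℕ) (P : Finset (Finset ℕ)) : Prop :=
  (∀ b ∈ P, b.Nonempty) ∧ (P : Set (Finset ℕ)).PairwiseDisjoint id ∧ P.sup id = g

/-- The position `j` is inner with respect to the block `b`:
`j ∉ b` and `min b < j < max b`. -/
def InnerPos (j : ℕ) (b : Finset ℕ) : Prop :=
  j ∉ b ∧ ∃ i ∈ b, ∃ k ∈ b, i < j ∧ j < k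

/-- A partition is admissible if no block contains a letter `w` that is inner
with respect to another block. -/
def Admissible (s : Word) (P : Finset (Finset ℕ)) : Prop :=
  ∀ b ∈ P, ∀ b' ∈ P, b ≠ b' → ∀ j ∈ b, letterAt s j = Letter.w → ¬ InnerPos j b'

open scoped Classical in
/-- The set `AP(s)` of admissible partitions of the positions `g` of the word `s`. -/
noncomputable def APfin (s : Word) (g : Finset ℕ) : Finset (Finset (Finset ℕ)) :=
  g.powerset.powerset.filter fun P => IsPartitionOn g P ∧ Admissible s P

/-- The subword of `s` determined by a set of positions `b`. -/
def wordOf (s : Word) (b : Finset ℕ) : Word :=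
  (b.sort (· ≤ ·)).map (letterAt s)

/-- `L` is the family of admissible cumulants of the moment function `M`:
`M(s) = Σ_{u ∈ AP(s)} L(u₁)⋯L(u_p)` for every nonempty word `s`. -/
def IsCumulants (M L : Word → ℂ) : Prop :=
  ∀ s : Word, s ≠ [] →
    M s = ∑ P ∈ APfin s (Finset.range s.length), ∏ b ∈ P, L (wordOf s b)

/-- `P` refines `Q`: every block of `P` is contained in a block of `Q`. -/
def Refines (P Q : Finset (Finset ℕ)) : Prop := ∀ b ∈ P, ∃ c ∈ Q, b ⊆ c

open scoped Classical in
/-- `m` is the Möbius function of the lattice `AP(s)` of admissible partitions of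
the position set `g` of `s`: `m(u|u) = 1` and `m(u|v) = −Σ_{u ≤ t < v} m(u|t)`. -/
noncomputable def IsMobius (s : Word) (g : Finset ℕ)
    (m : Finset (Finset ℕ) → Finset (Finset ℕ) → ℂ) : Prop :=
  (∀ u ∈ APfin s g, m u u = 1) ∧
    ∀ u ∈ APfin s g, ∀ v ∈ APfin s g, Refines u v → u ≠ v →
      m u v = -∑ t ∈ (APfin s g).filter fun t => Refines u t ∧ Refines t v ∧ t ≠ v, m u t

/-- `c` is the last block of `P`: the block with the largest least element. -/
def IsLastBlock (P : Finset (Finset ℕ)) (c : Finset ℕ) : Prop :=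
  c ∈ P ∧ ∀ b ∈ P, b ≠ c → ∃ i ∈ b, ∀ j ∈ c, i < j

/-- One transition of a shuffle: merge the last block of `P` into one of the other
blocks. -/
def MergeStep (P Q : Finset (Finset ℕ)) : Prop :=
  ∃ c, IsLastBlock P c ∧ ∃ b ∈ P, b ≠ c ∧ Q = insert (b ∪ c) ((P.erase b).erase c)

/-- `a(u)`: the number of admissible shuffles of `u`, i.e. of sequences
`u = u⁰ → u¹ → ⋯ → 1_s` of admissible partitions of `s`, each obtained from the
previous one by merging its last block into another block (`a(u) = 0` if `u` is
not an admissible partition of `s`). -/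
noncomputable def shuffleCount (s : Word) (u : Finset (Finset ℕ)) : ℕ :=
  Set.ncard {Lst : List (Finset (Finset ℕ)) |
    Lst.head? = some u ∧ Lst.getLast? = some {Finset.range s.length} ∧
    (∀ P ∈ Lst, P ∈ APfin s (Finset.range s.length)) ∧
    Lst.Chain' MergeStep}

section ShuffleAux

open Finset

/-- The set of admissible shuffle chains starting at `u`. -/
def chainSet (s : Word) (u : Finset (Finset ℕ)) : Set (List (Finset (Finset ℕ))) :=
  {Lst : List (Finset (Finset ℕ)) |
    Lst.head? = some u ∧ Lst.getLast? = some {Finset.range s.length} ∧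
    (∀ P ∈ Lst, P ∈ APfin s (Finset.range s.length)) ∧
    Lst.Chain' MergeStep}

lemma shuffleCount_eq (s : Word) (u : Finset (Finset ℕ)) :
    shuffleCount s u = (chainSet s u).ncard := rfl

lemma mem_APfin_iff {s : Word} {g : Finset ℕ} {P : Finset (Finset ℕ)} :
    P ∈ APfin s g ↔ IsPartitionOn g P ∧ Admissible s P := by
  classical
  simp only [APfin, Finset.mem_filter, Finset.mem_powerset, and_iff_right_iff_imp]
  rintro ⟨⟨hne, hdisj, hsup⟩, -⟩ b hb
  rw [Finset.mem_powerset, ← hsup]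
  exact Finset.le_sup (f := id) hb

lemma lastBlock_unique {P : Finset (Finset ℕ)} {c c' : Finset ℕ}
    (h : IsLastBlock P c) (h' : IsLastBlock P c') : c = c' := by
  by_contra hne
  obtain ⟨hc, H⟩ := h
  obtain ⟨hc', H'⟩ := h'
  obtain ⟨i, hi, hil⟩ := H c' hc' (Ne.symm hne)
  obtain ⟨i', hi', hil'⟩ := H' c hc hne
  exact lt_asymm (hil i' hi') (hil' i hi)

lemma mergeStep_card_lt {P Q : Finset (Finset ℕ)} (h : MergeStep P Q) :
    Q.card < P.card := by
  obtain ⟨c, ⟨hcP, -⟩, b, hbP, hbc, rfl⟩ := h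
  have h2 : c ∈ P.erase b := Finset.mem_erase.2 ⟨fun h => hbc h.symm, hcP⟩
  have e0 := Finset.card_insert_le (b ∪ c) ((P.erase b).erase c)
  have e1 := Finset.card_erase_of_mem h2
  have e2 := Finset.card_erase_of_mem hbP
  have h1 : 0 < (P.erase b).card := Finset.card_pos.2 ⟨c, h2⟩
  have h3 : 0 < P.card := Finset.card_pos.2 ⟨b, hbP⟩
  omega

lemma card_le_of_mem_APfin {s : Word} {g : Finset ℕ} {P : Finset (Finset ℕ)}
    (h : P ∈ APfin s g) : P.card ≤ g.card := by
  obtain ⟨⟨hne, hdisj, hsup⟩, -⟩ := mem_APfin_iff.1 h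
  have hd : ∀ x ∈ P, ∀ y ∈ P, x ≠ y → Disjoint (id x) (id y) := fun x hx y hy hxy =>
    hdisj hx hy hxy
  have hg : g.card = ∑ b ∈ P, b.card := by
    rw [← hsup, Finset.sup_eq_biUnion, Finset.card_biUnion hd]
    simp
  have : P.card = ∑ _b ∈ P, 1 := by simp
  rw [this, hg]
  exact Finset.sum_le_sum fun b hb => (hne b hb).card_pos

lemma exists_subtype_list {α : Type*} {p : α → Prop} (l : List α) (h : ∀ a ∈ l, p a) :
    ∃ l' : List {x // p x}, l'.map Subtype.val = l := by
  induction l with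
  | nil => exact ⟨[], rfl⟩
  | cons a l ih =>
    obtain ⟨l', hl'⟩ := ih fun x hx => h x (List.mem_cons_of_mem _ hx)
    exact ⟨⟨a, h a (List.mem_cons_self)⟩ :: l', by simp [hl']⟩

lemma chainSet_length_le {s : Word} {u : Finset (Finset ℕ)}
    {Lst : List (Finset (Finset ℕ))} (h : Lst ∈ chainSet s u) :
    Lst.length ≤ (Finset.range s.length).card + 1 := by
  obtain ⟨-, -, hmem, hchain⟩ := h
  set m := Lst.map Finset.card with hm
  have hchain' : m.Chain' (· > ·) := by
    rw [hm, List.Chain', List.isChain_map]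
    exact hchain.imp fun _ _ hPQ => mergeStep_card_lt hPQ
  have hpw : m.Pairwise (· > ·) := List.isChain_iff_pairwise.1 hchain'
  have hnd : m.Nodup := hpw.imp fun h => Nat.ne_of_gt h
  have hsub : m.toFinset ⊆ Finset.range ((Finset.range s.length).card + 1) := by
    intro x hx
    rw [List.mem_toFinset, hm] at hx
    obtain ⟨P, hP, rfl⟩ := List.mem_map.1 hx
    rw [Finset.mem_range]
    exact Nat.lt_succ_of_le (card_le_of_mem_APfin (hmem P hP))
  have := Finset.card_le_card hsub
  rwa [List.toFinset_card_of_nodup hnd, Finset.card_range, hm, List.length_map] at this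

lemma chainSet_finite (s : Word) (u : Finset (Finset ℕ)) : (chainSet s u).Finite := by
  classical
  set N := (Finset.range s.length).card + 1
  have : chainSet s u ⊆
      (List.map Subtype.val) ''
        {l : List {P // P ∈ APfin s (Finset.range s.length)} | l.length ≤ N} := by
    intro Lst hLst
    obtain ⟨l', hl'⟩ := exists_subtype_list Lst hLst.2.2.1
    refine ⟨l', ?_, hl'⟩
    have : l'.length = Lst.length := by rw [← hl', List.length_map]
    simpa [this, N] using chainSet_length_le hLst
  exact Set.Finite.subset (Set.Finite.image _ (List.finite_length_le _ N)) this

lemma ncard_biUnion_eq {β : Type*} (t : Finset (Finset ℕ)) (f : Finset ℕ → Set β) :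
    (∀ a ∈ t, (f a).Finite) →
    (∀ a ∈ t, ∀ b ∈ t, a ≠ b → Disjoint (f a) (f b)) →
    (⋃ a ∈ t, f a).ncard = ∑ a ∈ t, (f a).ncard := by
  classical
  induction t using Finset.induction_on with
  | empty => simp
  | @insert a t ha ih =>
    intro hfin hdisj
    rw [Finset.set_biUnion_insert, Finset.sum_insert ha,
      ← ih (fun x hx => hfin x (Finset.mem_insert_of_mem hx))
        (fun x hx y hy hxy => hdisj x (Finset.mem_insert_of_mem hx) y
          (Finset.mem_insert_of_mem hy) hxy)]
    refine Set.ncard_union_eq ?_ (hfin a (Finset.mem_insert_self a t)) ?_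
    · rw [Set.disjoint_iUnion_right]
      intro i
      rw [Set.disjoint_iUnion_right]
      intro hi
      exact hdisj a (Finset.mem_insert_self a t) i (Finset.mem_insert_of_mem hi)
        (fun h => ha (h ▸ hi))
    · exact Set.Finite.biUnion t.finite_toSet
        (fun x hx => hfin x (Finset.mem_insert_of_mem hx))

end ShuffleAux
section ShuffleMain

lemma top_mem_APfin {s : Word} (hs : s ≠ []) :
    ({Finset.range s.length} : Finset (Finset ℕ)) ∈ APfin s (Finset.range s.length) := by
  rw [mem_APfin_iff]
  refine ⟨⟨?_, ?_, ?_⟩, ?_⟩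
  · intro b hb
    rw [Finset.mem_singleton] at hb
    subst hb
    exact Finset.nonempty_range_iff.2 fun h => hs (List.length_eq_zero_iff.1 h)
  · simp [Set.pairwiseDisjoint_singleton]
  · simp
  · intro b hb b' hb' hne
    rw [Finset.mem_singleton] at hb hb'
    exact absurd (hb.trans hb'.symm) hne

lemma erase_pair_eq_empty {v : Finset (Finset ℕ)} {b c : Finset ℕ} (hbc : b ≠ c)
    (hveq : v = {b, c}) : (v.erase b).erase c = ∅ := by
  subst hveq
  rw [Finset.erase_insert (by simpa using hbc), Finset.erase_singleton]

lemma pair_union_eq {s : Word} {v : Finset (Finset ℕ)} {b c : Finset ℕ}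
    (hv : v ∈ APfin s (Finset.range s.length)) (hveq : v = {b, c}) :
    b ∪ c = Finset.range s.length := by
  obtain ⟨⟨-, -, hsup⟩, -⟩ := mem_APfin_iff.1 hv
  rw [← hsup, hveq]
  simp [Finset.sup_insert, Finset.sup_singleton, Finset.sup_eq_union]

lemma mergeStep_of_two {s : Word} {v : Finset (Finset ℕ)}
    (hv : v ∈ APfin s (Finset.range s.length)) (h2 : v.card = 2) :
    MergeStep v {Finset.range s.length} := by
  obtain ⟨⟨hne, hdisj, hsup⟩, -⟩ := mem_APfin_iff.1 hv
  obtain ⟨b, c, hbc, hveq⟩ := Finset.card_eq_two.1 h2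
  have hb : b ∈ v := by rw [hveq]; simp
  have hc : c ∈ v := by rw [hveq]; simp
  have hbne := hne b hb
  have hcne := hne c hc
  have hdis : Disjoint b c := hdisj hb hc hbc
  have hmins : b.min' hbne ≠ c.min' hcne := by
    intro h
    exact Finset.disjoint_left.1 hdis (b.min'_mem hbne) (h ▸ c.min'_mem hcne)
  rcases lt_or_gt_of_ne hmins with h | h
  · refine ⟨c, ⟨hc, ?_⟩, b, hb, hbc, ?_⟩
    · intro d hd hdc
      have hdb : d = b := by
        rw [hveq] at hd
        rcases Finset.mem_insert.1 hd with h' | h'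
        · exact h'
        · exact absurd (Finset.mem_singleton.1 h') hdc
      subst hdb
      exact ⟨d.min' hbne, d.min'_mem hbne, fun j hj => lt_of_lt_of_le h (c.min'_le j hj)⟩
    · rw [erase_pair_eq_empty hbc hveq, pair_union_eq hv hveq]
      simp
  · have hveq' : v = {c, b} := by rw [hveq]; exact Finset.pair_comm b c
    refine ⟨b, ⟨hb, ?_⟩, c, hc, Ne.symm hbc, ?_⟩
    · intro d hd hdb
      have hdc : d = c := by
        rw [hveq'] at hd
        rcases Finset.mem_insert.1 hd with h' | h'
        · exact h'
        · exact absurd (Finset.mem_singleton.1 h') hdb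
      subst hdc
      exact ⟨d.min' hcne, d.min'_mem hcne, fun j hj => lt_of_lt_of_le h (b.min'_le j hj)⟩
    · rw [erase_pair_eq_empty (Ne.symm hbc) hveq']
      rw [show c ∪ b = Finset.range s.length by
        rw [Finset.union_comm]; exact pair_union_eq hv hveq]
      simp

lemma mergeStep_two_eq {s : Word} {v Q : Finset (Finset ℕ)}
    (hv : v ∈ APfin s (Finset.range s.length)) (h2 : v.card = 2)
    (h : MergeStep v Q) : Q = {Finset.range s.length} := by
  obtain ⟨c0, ⟨hc0, -⟩, b0, hb0, hbc0, rfl⟩ := h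
  have hsub : ({b0, c0} : Finset (Finset ℕ)) ⊆ v := by
    intro x hx
    rcases Finset.mem_insert.1 hx with rfl | hx'
    · exact hb0
    · exact (Finset.mem_singleton.1 hx') ▸ hc0
  have hveq : v = {b0, c0} :=
    (Finset.eq_of_subset_of_card_le hsub (by rw [h2, Finset.card_pair hbc0])).symm
  rw [erase_pair_eq_empty hbc0 hveq, pair_union_eq hv hveq]
  simp

lemma not_mergeStep_singleton (g : Finset ℕ) (Q : Finset (Finset ℕ)) :
    ¬ MergeStep {g} Q := by
  rintro ⟨c, ⟨hc, -⟩, b, hb, hbc, -⟩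
  rw [Finset.mem_singleton] at hc hb
  exact hbc (hb.trans hc.symm)

lemma chainSet_two {s : Word} (hs : s ≠ []) {v : Finset (Finset ℕ)}
    (hv : v ∈ APfin s (Finset.range s.length)) (h2 : v.card = 2) :
    chainSet s v = {[v, {Finset.range s.length}]} := by
  ext Lst
  simp only [Set.mem_singleton_iff]
  constructor
  · rintro ⟨hhead, hlast, hmem, hchain⟩
    cases Lst with
    | nil => simp at hhead
    | cons P rest =>
      have hP : v = P := (by simpa using hhead : P = v).symm
      subst hP
      cases rest with
      | nil =>
        have hveq : v = {Finset.range s.length} := by simpa using hlast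
        rw [hveq] at h2; simp at h2
      | cons Q rest' =>
        obtain ⟨hstep, hchain'⟩ := List.isChain_cons_cons.1 hchain
        have hQ : Q = {Finset.range s.length} := mergeStep_two_eq hv h2 hstep
        subst hQ
        cases rest' with
        | nil => rfl
        | cons Q' r'' =>
          exact absurd (List.isChain_cons_cons.1 hchain').1
            (not_mergeStep_singleton _ _)
  · rintro rfl
    refine ⟨rfl, by simp, ?_, List.isChain_cons_cons.2 ⟨mergeStep_of_two hv h2,
      List.isChain_singleton _⟩⟩
    intro P hP
    rcases List.mem_cons.1 hP with rfl | hP'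
    · exact hv
    · rcases List.mem_cons.1 hP' with rfl | hP''
      · exact top_mem_APfin hs
      · simp at hP''

lemma merge_ne {s : Word} {g : Finset ℕ} {u : Finset (Finset ℕ)} (hu : u ∈ APfin s g)
    {c b b' : Finset ℕ} (hcu : c ∈ u) (hb : b ∈ u.erase c) (hb' : b' ∈ u.erase c)
    (hne : b ≠ b') :
    insert (b ∪ c) ((u.erase b).erase c) ≠ insert (b' ∪ c) ((u.erase b').erase c) := by
  obtain ⟨⟨hnonempty, hdisj, -⟩, -⟩ := mem_APfin_iff.1 hu
  obtain ⟨hbc, hbu⟩ := Finset.mem_erase.1 hb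
  obtain ⟨hbc', hbu'⟩ := Finset.mem_erase.1 hb'
  intro h
  have hmem : b ∪ c ∈ insert (b' ∪ c) ((u.erase b').erase c) :=
    h ▸ Finset.mem_insert_self _ _
  obtain ⟨x, hx⟩ := hnonempty b hbu
  rcases Finset.mem_insert.1 hmem with heq | hmem'
  · have hxu : x ∈ b' ∪ c := heq ▸ Finset.mem_union_left c hx
    rcases Finset.mem_union.1 hxu with h1 | h1
    · exact Finset.disjoint_left.1 (hdisj hbu hbu' hne) hx h1
    · exact Finset.disjoint_left.1 (hdisj hbu hcu hbc) hx h1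
  · obtain ⟨hd1, hd2⟩ := Finset.mem_erase.1 hmem'
    obtain ⟨hd3, hd4⟩ := Finset.mem_erase.1 hd2
    obtain ⟨y, hy⟩ := hnonempty c hcu
    exact Finset.disjoint_left.1 (hdisj hcu hd4 (fun hh => hd1 hh.symm)) hy
      (Finset.mem_union_right b hy)

lemma chainSet_decomp {s : Word} {u : Finset (Finset ℕ)}
    (hu : u ∈ APfin s (Finset.range s.length)) (hcard : 2 < u.card)
    {c : Finset ℕ} (hc : IsLastBlock u c) :
    chainSet s u =
      ⋃ b ∈ u.erase c,
        (List.cons u) '' chainSet s (insert (b ∪ c) ((u.erase b).erase c)) := by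
  ext Lst
  simp only [Set.mem_iUnion, Set.mem_image, exists_prop]
  constructor
  · rintro ⟨hhead, hlast, hmem, hchain⟩
    cases Lst with
    | nil => simp at hhead
    | cons P rest =>
      have hP : u = P := (by simpa using hhead : P = u).symm
      subst hP
      cases rest with
      | nil =>
        have hveq : u = {Finset.range s.length} := by simpa using hlast
        rw [hveq] at hcard; simp at hcard
      | cons Q rest' =>
        obtain ⟨hstep, hchain'⟩ := List.isChain_cons_cons.1 hchain
        obtain ⟨c', hc', b, hbu, hbc, hQ⟩ := hstep
        have hcc : c' = c := lastBlock_unique hc' hc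
        subst hcc
        refine ⟨b, Finset.mem_erase.2 ⟨hbc, hbu⟩, Q :: rest',
          ⟨by simpa using hQ, by simpa using hlast, ?_, hchain'⟩, rfl⟩
        intro P hP
        exact hmem P (List.mem_cons_of_mem _ hP)
  · rintro ⟨b, hb, rest, ⟨hhead, hlast, hmem, hchain⟩, rfl⟩
    obtain ⟨hbc, hbu⟩ := Finset.mem_erase.1 hb
    cases rest with
    | nil => simp at hhead
    | cons Q rest' =>
      have hQ : Q = insert (b ∪ c) ((u.erase b).erase c) := by simpa using hhead
      refine ⟨rfl, by simpa using hlast, ?_, List.isChain_cons_cons.2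
        ⟨⟨c, hc, b, hbu, hbc, hQ⟩, hchain⟩⟩
      intro P hP
      rcases List.mem_cons.1 hP with rfl | hP'
      · exact hu
      · exact hmem P hP'

end ShuffleMain
/-- recurrence for the number of admissible shuffles: if `u` has more
than two blocks and `c` is its last block, then `a(u) = Σ_{b ≠ c} a(u with c merged
into b)`; moreover `a(u) = 1` for admissible partitions with exactly two blocks. -/
theorem shuffleCount_recurrence (s : Word) (hs : s ≠ [])
    (u : Finset (Finset ℕ)) (hu : u ∈ APfin s (Finset.range s.length))
    (hcard : 2 < u.card) (c : Finset ℕ) (hc : IsLastBlock u c) :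
    (shuffleCount s u =
        ∑ b ∈ u.erase c, shuffleCount s (insert (b ∪ c) ((u.erase b).erase c))) ∧
      ∀ v ∈ APfin s (Finset.range s.length), v.card = 2 → shuffleCount s v = 1 := by
  constructor
  · have hfin : ∀ b ∈ u.erase c,
        ((List.cons u) '' chainSet s (insert (b ∪ c) ((u.erase b).erase c))).Finite :=
      fun b _ => (chainSet_finite _ _).image _
    have hdis : ∀ b ∈ u.erase c, ∀ b' ∈ u.erase c, b ≠ b' →
        Disjoint ((List.cons u) '' chainSet s (insert (b ∪ c) ((u.erase b).erase c)))
          ((List.cons u) '' chainSet s (insert (b' ∪ c) ((u.erase b').erase c))) := by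
      intro b hb b' hb' hne
      rw [Set.disjoint_left]
      rintro x ⟨r, hr, rfl⟩ ⟨r', hr', heq⟩
      have hrr : r' = r := List.cons_injective heq
      subst hrr
      have h1 := hr.1
      have h2 := hr'.1
      rw [h1] at h2
      exact merge_ne hu hc.1 hb hb' hne (Option.some.inj h2)
    rw [shuffleCount_eq, chainSet_decomp hu hcard hc, ncard_biUnion_eq _ _ hfin hdis]
    refine Finset.sum_congr rfl fun b _ => ?_
    rw [Set.ncard_image_of_injective _ List.cons_injective, shuffleCount_eq]
  · intro v hv h2
    rw [shuffleCount_eq, chainSet_two hs hv h2, Set.ncard_singleton]
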